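/- arXiv:2405.08296 — 5 statements merged into one kernel-verified Lean document; each statement's English description precedes it below -/
import Mathlib

section
/- (Reflection inequality for signed distance) Let ψ be a norm on ℝ^N compatible with a unit vector ν (i.e. ψ(x) = ψ(x − 2(x·ν)ν) for all x), let H = {x : x·ν ≤ s} be a half-space with reflection Ψ across ∂H, and suppose F ⊆ ℝ^N satisfies Ψ(F) ∩ H ⊆ F ∩ H. Then for every x ∈ H, sd^ψ_F(x) ≤ sd^ψ_F(Ψ(x)), where sd^ψ_F is the signed ψ-distance to F (negative inside F, positive outside). -/
open Real

noncomputable section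
open Classical

/-- ψ-distance from a point to a set: inf of ψ(x − y) over y ∈ A. -/
def distPsi {N : ℕ} (ψ : EuclideanSpace ℝ (Fin N) → ℝ)
    (A : Set (EuclideanSpace ℝ (Fin N))) (x : EuclideanSpace ℝ (Fin N)) : ℝ :=
  sInf ((fun y => ψ (x - y)) '' A)

/-- Signed ψ-distance to a set F: negative inside F, positive outside. -/
def sdPsi {N : ℕ} (ψ : EuclideanSpace ℝ (Fin N) → ℝ)
    (F : Set (EuclideanSpace ℝ (Fin N))) (x : EuclideanSpace ℝ (Fin N)) : ℝ :=
  if x ∈ F then -(distPsi ψ Fᶜ x) else distPsi ψ F x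

section Aux

variable {N : ℕ} {ψ : EuclideanSpace ℝ (Fin N) → ℝ}

lemma psi_zero (hψ_smul : ∀ (c : ℝ) x, ψ (c • x) = |c| * ψ x) : ψ 0 = 0 := by
  have := hψ_smul 0 0
  simpa using this

lemma psi_neg (hψ_smul : ∀ (c : ℝ) x, ψ (c • x) = |c| * ψ x) (x : EuclideanSpace ℝ (Fin N)) :
    ψ (-x) = ψ x := by
  have := hψ_smul (-1) x
  simpa using this

lemma psi_nonneg (hψ_add : ∀ x y, ψ (x + y) ≤ ψ x + ψ y)
    (hψ_smul : ∀ (c : ℝ) x, ψ (c • x) = |c| * ψ x) (x : EuclideanSpace ℝ (Fin N)) :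
    0 ≤ ψ x := by
  have h := hψ_add x (-x)
  rw [add_neg_cancel, psi_zero hψ_smul, psi_neg hψ_smul] at h
  linarith

lemma psi_key (hψ_add : ∀ x y, ψ (x + y) ≤ ψ x + ψ y)
    (hψ_smul : ∀ (c : ℝ) x, ψ (c • x) = |c| * ψ x)
    {ν : EuclideanSpace ℝ (Fin N)} (hν : ‖ν‖ = 1)
    (hcompat : ∀ x, ψ (x - (2 * (inner ℝ x ν : ℝ)) • ν) = ψ x)
    (u : EuclideanSpace ℝ (Fin N)) (c : ℝ) (hc : 0 ≤ c)
    (h2 : 0 ≤ 2 * (inner ℝ u ν : ℝ) + c) :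
    ψ u ≤ ψ (u + c • ν) := by
  have hνν : (inner ℝ ν ν : ℝ) = 1 := by
    rw [real_inner_self_eq_norm_sq, hν]; norm_num
  set a : ℝ := (inner ℝ u ν : ℝ) with ha
  set w : EuclideanSpace ℝ (Fin N) := u - a • ν with hw
  have hwv : (inner ℝ w ν : ℝ) = 0 := by
    simp only [hw, inner_sub_left, real_inner_smul_left, hνν]
    rw [← ha]; ring
  have heven : ∀ t : ℝ, ψ (w + t • ν) = ψ (w - t • ν) := by
    intro t
    have h := hcompat (w + t • ν)
    have hin : (inner ℝ (w + t • ν) ν : ℝ) = t := by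
      simp only [inner_add_left, real_inner_smul_left, hνν, hwv]; ring
    rw [hin] at h
    have heq : w + t • ν - (2 * t) • ν = w - t • ν := by module
    rw [heq] at h
    exact h.symm
  set b : ℝ := a + c with hbdef
  have hb : 0 ≤ b := by simp only [hbdef]; linarith
  rcases eq_or_lt_of_le hb with hb0 | hbpos
  · have hc0 : c = 0 := by
      have : a = -c := by simp only [hbdef] at hb0; linarith
      rw [this] at h2; linarith
    simp [hc0]
  · set lam : ℝ := (a + b) / (2 * b) with hlam
    have h2b : (0:ℝ) < 2 * b := by linarith
    have hlam0 : 0 ≤ lam := by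
      apply div_nonneg _ (le_of_lt h2b)
      simp only [hbdef]; linarith
    have hlam1 : lam ≤ 1 := by
      rw [hlam, div_le_one h2b]; simp only [hbdef]; linarith
    have hcoef : a = lam * b - (1 - lam) * b := by
      have : lam * (2 * b) = a + b := div_mul_cancel₀ _ (ne_of_gt h2b)
      nlinarith [this]
    have hu : u = lam • (w + b • ν) + (1 - lam) • (w - b • ν) := by
      have h1 : u = w + a • ν := by rw [hw]; module
      rw [h1, hcoef]; module
    have hub : u + c • ν = w + b • ν := by
      rw [hw, hbdef]; module
    calc ψ u = ψ (lam • (w + b • ν) + (1 - lam) • (w - b • ν)) := by rw [← hu]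
      _ ≤ ψ (lam • (w + b • ν)) + ψ ((1 - lam) • (w - b • ν)) := hψ_add _ _
      _ = lam * ψ (w + b • ν) + (1 - lam) * ψ (w - b • ν) := by
          rw [hψ_smul, hψ_smul, abs_of_nonneg hlam0, abs_of_nonneg (by linarith)]
      _ = ψ (w + b • ν) := by rw [← heven b]; ring
      _ = ψ (u + c • ν) := by rw [hub]

lemma distPsi_nonneg (hψ_add : ∀ x y, ψ (x + y) ≤ ψ x + ψ y)
    (hψ_smul : ∀ (c : ℝ) x, ψ (c • x) = |c| * ψ x)
    (A : Set (EuclideanSpace ℝ (Fin N))) (x : EuclideanSpace ℝ (Fin N)) :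
    0 ≤ distPsi ψ A x := by
  apply Real.sInf_nonneg
  rintro r ⟨y, -, rfl⟩
  exact psi_nonneg hψ_add hψ_smul _

lemma distPsi_mono (hψ_add : ∀ x y, ψ (x + y) ≤ ψ x + ψ y)
    (hψ_smul : ∀ (c : ℝ) x, ψ (c • x) = |c| * ψ x)
    (A : Set (EuclideanSpace ℝ (Fin N))) (p q : EuclideanSpace ℝ (Fin N))
    (h : ∀ y ∈ A, ∃ z ∈ A, ψ (p - z) ≤ ψ (q - y)) :
    distPsi ψ A p ≤ distPsi ψ A q := by
  rcases A.eq_empty_or_nonempty with rfl | ⟨y0, hy0⟩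
  · simp [distPsi]
  · apply le_csInf ((Set.Nonempty.image _ ⟨y0, hy0⟩))
    rintro r ⟨y, hy, rfl⟩
    obtain ⟨z, hz, hle⟩ := h y hy
    refine le_trans (csInf_le ?_ ⟨z, hz, rfl⟩) hle
    exact ⟨0, by rintro r ⟨t, -, rfl⟩; exact psi_nonneg hψ_add hψ_smul _⟩

end Aux

/-- Reflection inequality for signed distance: if ψ is a norm compatible with
the unit vector ν, H = {x : x·ν ≤ s}, Ψ is the reflection across ∂H and Ψ(F) ∩ H ⊆ F ∩ H,
then sd^ψ_F(x) ≤ sd^ψ_F(Ψ(x)) for every x ∈ H. -/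
theorem reflection_signed_distance {N : ℕ}
    (ψ : EuclideanSpace ℝ (Fin N) → ℝ)
    (hψ_add : ∀ x y, ψ (x + y) ≤ ψ x + ψ y)
    (hψ_smul : ∀ (c : ℝ) x, ψ (c • x) = |c| * ψ x)
    (hψ_pos : ∀ x, ψ x = 0 ↔ x = 0)
    (ν : EuclideanSpace ℝ (Fin N)) (hν : ‖ν‖ = 1)
    (hcompat : ∀ x, ψ (x - (2 * (inner ℝ x ν : ℝ)) • ν) = ψ x)
    (s : ℝ) (F : Set (EuclideanSpace ℝ (Fin N)))
    (Ψ : EuclideanSpace ℝ (Fin N) → EuclideanSpace ℝ (Fin N))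
    (hΨ : ∀ x, Ψ x = x + (2 * (s - (inner ℝ x ν : ℝ))) • ν)
    (hrefl : ∀ x, (inner ℝ x ν : ℝ) ≤ s → Ψ x ∈ F → x ∈ F) :
    ∀ x, (inner ℝ x ν : ℝ) ≤ s → sdPsi ψ F x ≤ sdPsi ψ F (Ψ x) := by
  have hνν : (inner ℝ ν ν : ℝ) = 1 := by
    rw [real_inner_self_eq_norm_sq, hν]; norm_num
  -- inner product of Ψ x with ν
  have hΨinner : ∀ x, (inner ℝ (Ψ x) ν : ℝ) = 2 * s - (inner ℝ x ν : ℝ) := by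
    intro x
    rw [hΨ x]
    simp only [inner_add_left, real_inner_smul_left, hνν]
    ring
  -- Ψ is an involution
  have hΨΨ : ∀ x, Ψ (Ψ x) = x := by
    intro x
    rw [hΨ (Ψ x), hΨinner x, hΨ x]
    module
  -- Ψ is a ψ-isometry
  have hiso : ∀ x y, ψ (Ψ x - Ψ y) = ψ (x - y) := by
    intro x y
    have hd : Ψ x - Ψ y = (x - y) - (2 * (inner ℝ (x - y) ν : ℝ)) • ν := by
      rw [hΨ x, hΨ y]
      simp only [inner_sub_left]
      module
    rw [hd, hcompat]
  -- key inequality 1 : x, y in H  ⟹  ψ(x - y) ≤ ψ(Ψ x - y)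
  have key1 : ∀ x y : EuclideanSpace ℝ (Fin N), (inner ℝ x ν : ℝ) ≤ s → (inner ℝ y ν : ℝ) ≤ s →
      ψ (x - y) ≤ ψ (Ψ x - y) := by
    intro x y hx hy
    have hc : (0:ℝ) ≤ 2 * (s - (inner ℝ x ν : ℝ)) := by linarith
    have h2 : 0 ≤ 2 * (inner ℝ (x - y) ν : ℝ) + 2 * (s - (inner ℝ x ν : ℝ)) := by
      rw [inner_sub_left]; linarith
    have heq : Ψ x - y = (x - y) + (2 * (s - (inner ℝ x ν : ℝ))) • ν := by
      rw [hΨ x]; module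
    rw [heq]
    exact psi_key hψ_add hψ_smul hν hcompat _ _ hc h2
  -- key inequality 2 : x in H, y outside H  ⟹  ψ(Ψ x - y) ≤ ψ(x - y)
  have key2 : ∀ x y : EuclideanSpace ℝ (Fin N), (inner ℝ x ν : ℝ) ≤ s → s ≤ (inner ℝ y ν : ℝ) →
      ψ (Ψ x - y) ≤ ψ (x - y) := by
    intro x y hx hy
    have hc : (0:ℝ) ≤ 2 * (s - (inner ℝ x ν : ℝ)) := by linarith
    have h2 : 0 ≤ 2 * (inner ℝ (y - Ψ x) ν : ℝ) + 2 * (s - (inner ℝ x ν : ℝ)) := by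
      rw [inner_sub_left, hΨinner x]; linarith
    have heq : y - x = (y - Ψ x) + (2 * (s - (inner ℝ x ν : ℝ))) • ν := by
      rw [hΨ x]; module
    have h := psi_key hψ_add hψ_smul hν hcompat (y - Ψ x) _ hc h2
    rw [← heq] at h
    calc ψ (Ψ x - y) = ψ (-(y - Ψ x)) := by congr 1; abel
      _ = ψ (y - Ψ x) := psi_neg hψ_smul _
      _ ≤ ψ (y - x) := h
      _ = ψ (-(x - y)) := by congr 1; abel
      _ = ψ (x - y) := psi_neg hψ_smul _
  intro x hx
  by_cases hxF : x ∈ F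
  · by_cases hΨxF : Ψ x ∈ F
    · -- both in F : need dist(Ψx, Fᶜ) ≤ dist(x, Fᶜ)
      rw [sdPsi, sdPsi, if_pos hxF, if_pos hΨxF, neg_le_neg_iff]
      apply distPsi_mono hψ_add hψ_smul
      intro y hy
      by_cases hyH : (inner ℝ y ν : ℝ) ≤ s
      · -- y in H, y ∉ F ⟹ Ψ y ∉ F
        refine ⟨Ψ y, fun hmem => hy (hrefl y hyH hmem), ?_⟩
        rw [hiso]
      · refine ⟨y, hy, key2 x y hx (le_of_not_ge hyH)⟩
    · -- x ∈ F, Ψ x ∉ F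
      rw [sdPsi, sdPsi, if_pos hxF, if_neg hΨxF]
      have h1 : 0 ≤ distPsi ψ F (Ψ x) := distPsi_nonneg hψ_add hψ_smul _ _
      have h2 : 0 ≤ distPsi ψ Fᶜ x := distPsi_nonneg hψ_add hψ_smul _ _
      linarith
  · -- x ∉ F ⟹ Ψ x ∉ F (by hrefl)
    have hΨxF : Ψ x ∉ F := fun hmem => hxF (hrefl x hx hmem)
    rw [sdPsi, sdPsi, if_neg hxF, if_neg hΨxF]
    apply distPsi_mono hψ_add hψ_smul
    intro y hy
    by_cases hyH : (inner ℝ y ν : ℝ) ≤ s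
    · exact ⟨y, hy, key1 x y hx hyH⟩
    · -- y ∉ H : use Ψ y ∈ F (since Ψ y ∈ H and Ψ (Ψ y) = y ∈ F)
      have hΨyH : (inner ℝ (Ψ y) ν : ℝ) ≤ s := by rw [hΨinner]; linarith [le_of_not_ge hyH]
      have hΨyF : Ψ y ∈ F := hrefl (Ψ y) hΨyH (by rw [hΨΨ]; exact hy)
      refine ⟨Ψ y, hΨyF, ?_⟩
      calc ψ (x - Ψ y) = ψ (Ψ (Ψ x) - Ψ y) := by rw [hΨΨ]
        _ = ψ (Ψ x - y) := hiso _ _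
        _ ≤ ψ (Ψ x - y) := le_rfl
end
end

section
/- Let P ⊆ S^{N−1} be a finite root system (i.e. −ν ∈ P and the reflection x ↦ x − 2(x·ν)ν maps P onto P, for each ν ∈ P). Define g(x) = (1/2)Σ_{ν∈P} |x·ν|. Then for every ν₀ ∈ P, every y with y·ν₀ ≥ 0, and every t ≥ 0, one has g(y + tν₀) − g(y) ≥ t. -/
open Finset

private lemma key_abs (a p q : ℝ) (hp : 0 ≤ p) (hq : 0 ≤ q) :
    |a| + |a - 2*p| ≤ |a + q| + |a - 2*p - q| := by
  rcases abs_cases a with ⟨h1, _⟩ | ⟨h1, _⟩ <;>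
  rcases abs_cases (a - 2*p) with ⟨h2, _⟩ | ⟨h2, _⟩ <;>
  rcases abs_cases (a + q) with ⟨h3, h3'⟩ | ⟨h3, h3'⟩ <;>
  rcases abs_cases (a - 2*p - q) with ⟨h4, h4'⟩ | ⟨h4, h4'⟩ <;>
  linarith

private lemma key_abs2 (a s t c : ℝ) (hs : 0 ≤ s) (ht : 0 ≤ t) :
    |a| + |a - 2*(s*c)| ≤ |a + t*c| + |a - 2*(s*c) - t*c| := by
  rcases le_total 0 c with hc | hc
  · exact key_abs a (s*c) (t*c) (mul_nonneg hs hc) (mul_nonneg ht hc)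
  · have := key_abs (-a) (s*(-c)) (t*(-c)) (mul_nonneg hs (by linarith)) (mul_nonneg ht (by linarith))
    have e1 : -a - 2*(s*(-c)) = -(a - 2*(s*c)) := by ring
    have e2 : -a + t*(-c) = -(a + t*c) := by ring
    have e3 : -a - 2*(s*(-c)) - t*(-c) = -(a - 2*(s*c) - t*c) := by ring
    rw [e3, e1, e2, abs_neg, abs_neg, abs_neg, abs_neg] at this
    linarith

/-- for a finite root system P ⊆ S^{N−1} and g(x) = (1/2)Σ_{ν∈P}|x·ν|,
one has g(y + tν₀) − g(y) ≥ t whenever ν₀ ∈ P, y·ν₀ ≥ 0 and t ≥ 0. -/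
theorem root_system_g_growth {N : ℕ}
    (P : Finset (EuclideanSpace ℝ (Fin N)))
    (hunit : ∀ ν ∈ P, ‖ν‖ = 1)
    (hneg : ∀ ν ∈ P, -ν ∈ P)
    (hrefl : ∀ ν ∈ P, ∀ p ∈ P, p - (2 * (inner ℝ p ν : ℝ)) • ν ∈ P)
    (g : EuclideanSpace ℝ (Fin N) → ℝ)
    (hg : ∀ x, g x = (1 / 2) * ∑ ν ∈ P, |(inner ℝ x ν : ℝ)|) :
    ∀ ν₀ ∈ P, ∀ y : EuclideanSpace ℝ (Fin N), 0 ≤ (inner ℝ y ν₀ : ℝ) →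
      ∀ t : ℝ, 0 ≤ t → t ≤ g (y + t • ν₀) - g y := by
  classical
  intro ν₀ hν₀ y hy t ht
  have hn0 : ‖ν₀‖ = 1 := hunit ν₀ hν₀
  have hnn : (inner ℝ ν₀ ν₀ : ℝ) = 1 := by
    rw [real_inner_self_eq_norm_sq, hn0]; norm_num
  set σ : EuclideanSpace ℝ (Fin N) → EuclideanSpace ℝ (Fin N) :=
    fun p => p - (2 * (inner ℝ p ν₀ : ℝ)) • ν₀ with hσ
  set h : EuclideanSpace ℝ (Fin N) → ℝ :=
    fun ν => |(inner ℝ (y + t • ν₀) ν : ℝ)| - |(inner ℝ y ν : ℝ)| with hh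
  have hinner1 : ∀ ν : EuclideanSpace ℝ (Fin N),
      (inner ℝ (y + t • ν₀) ν : ℝ) = inner ℝ y ν + t * inner ℝ ν₀ ν := by
    intro ν; rw [inner_add_left, real_inner_smul_left]
  have hinner2 : ∀ ν : EuclideanSpace ℝ (Fin N),
      (inner ℝ y (σ ν) : ℝ) = inner ℝ y ν - 2 * ((inner ℝ y ν₀ : ℝ) * inner ℝ ν₀ ν) := by
    intro ν
    simp only [hσ, inner_sub_right, real_inner_smul_right, real_inner_comm ν ν₀]
    ring
  have hinner3 : ∀ ν : EuclideanSpace ℝ (Fin N),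
      (inner ℝ ν₀ (σ ν) : ℝ) = - inner ℝ ν₀ ν := by
    intro ν
    simp only [hσ, inner_sub_right, real_inner_smul_right, real_inner_comm ν ν₀, hnn]
    ring
  have hcomp : ∀ ν : EuclideanSpace ℝ (Fin N), h ν + h (σ ν) =
      (|(inner ℝ y ν : ℝ) + t * inner ℝ ν₀ ν|
        + |(inner ℝ y ν : ℝ) - 2 * ((inner ℝ y ν₀ : ℝ) * inner ℝ ν₀ ν) - t * inner ℝ ν₀ ν|)
      - (|(inner ℝ y ν : ℝ)| + |(inner ℝ y ν : ℝ) - 2 * ((inner ℝ y ν₀ : ℝ) * inner ℝ ν₀ ν)|) := by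
    intro ν
    have e2 := hinner1 (σ ν)
    rw [hinner2 ν, hinner3 ν] at e2
    simp only [hh]
    rw [hinner1 ν, e2, hinner2 ν]
    rw [show (inner ℝ y ν : ℝ) - 2 * ((inner ℝ y ν₀ : ℝ) * inner ℝ ν₀ ν) + t * (-(inner ℝ ν₀ ν : ℝ))
        = (inner ℝ y ν : ℝ) - 2 * ((inner ℝ y ν₀ : ℝ) * inner ℝ ν₀ ν) - t * inner ℝ ν₀ ν from by ring]
    ring
  have hFnonneg : ∀ ν : EuclideanSpace ℝ (Fin N), 0 ≤ h ν + h (σ ν) := by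
    intro ν
    rw [hcomp ν]
    have := key_abs2 (inner ℝ y ν) (inner ℝ y ν₀) t (inner ℝ ν₀ ν) hy ht
    linarith
  have hFν₀ : h ν₀ + h (σ ν₀) = 2 * t := by
    rw [hcomp ν₀, hnn]
    rw [abs_of_nonneg (show (0:ℝ) ≤ (inner ℝ y ν₀ : ℝ) + t * 1 by nlinarith),
        abs_of_nonpos
          (show (inner ℝ y ν₀ : ℝ) - 2 * ((inner ℝ y ν₀ : ℝ) * 1) - t * 1 ≤ 0 by nlinarith),
        abs_of_nonneg hy,
        abs_of_nonpos (show (inner ℝ y ν₀ : ℝ) - 2 * ((inner ℝ y ν₀ : ℝ) * 1) ≤ 0 by nlinarith)]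
    ring
  have hFν₀' : h (-ν₀) + h (σ (-ν₀)) = 2 * t := by
    rw [hcomp (-ν₀)]
    simp only [inner_neg_right, hnn]
    rw [abs_of_nonpos (show -(inner ℝ y ν₀ : ℝ) + t * (-1) ≤ 0 by nlinarith),
        abs_of_nonneg
          (show (0:ℝ) ≤ -(inner ℝ y ν₀ : ℝ) - 2 * ((inner ℝ y ν₀ : ℝ) * (-1)) - t * (-1) by nlinarith),
        abs_of_nonpos (show -(inner ℝ y ν₀ : ℝ) ≤ 0 by linarith),
        abs_of_nonneg (show (0:ℝ) ≤ -(inner ℝ y ν₀ : ℝ) - 2 * ((inner ℝ y ν₀ : ℝ) * (-1)) by nlinarith)]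
    ring
  -- σ is an involution mapping P to P
  have hσmem : ∀ ν ∈ P, σ ν ∈ P := fun ν hν => hrefl ν₀ hν₀ ν hν
  have hσσ : ∀ ν : EuclideanSpace ℝ (Fin N), σ (σ ν) = ν := by
    intro ν
    simp only [hσ, inner_sub_left, real_inner_smul_left, hnn]
    module
  have hsum_eq : ∑ ν ∈ P, h ν = ∑ ν ∈ P, h (σ ν) :=
    Finset.sum_nbij' σ σ hσmem hσmem (fun ν _ => hσσ ν) (fun ν _ => hσσ ν)
      (fun ν hν => by rw [hσσ ν])
  have h2 : 2 * ∑ ν ∈ P, h ν = ∑ ν ∈ P, (h ν + h (σ ν)) := by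
    rw [Finset.sum_add_distrib, ← hsum_eq]; ring
  have hνne : (-ν₀ : EuclideanSpace ℝ (Fin N)) ≠ ν₀ := by
    intro hcon
    have h1 : (inner ℝ (-ν₀ : EuclideanSpace ℝ (Fin N)) ν₀ : ℝ) = 1 := by rw [hcon]; exact hnn
    rw [inner_neg_left, hnn] at h1
    norm_num at h1
  have hmem' : -ν₀ ∈ P.erase ν₀ := Finset.mem_erase.mpr ⟨hνne, hneg ν₀ hν₀⟩
  have hsplit1 : (h ν₀ + h (σ ν₀)) + ∑ ν ∈ P.erase ν₀, (h ν + h (σ ν))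
      = ∑ ν ∈ P, (h ν + h (σ ν)) :=
    Finset.add_sum_erase P (fun ν => h ν + h (σ ν)) hν₀
  have hsplit2 : (h (-ν₀) + h (σ (-ν₀))) + ∑ ν ∈ (P.erase ν₀).erase (-ν₀), (h ν + h (σ ν))
      = ∑ ν ∈ P.erase ν₀, (h ν + h (σ ν)) :=
    Finset.add_sum_erase _ (fun ν => h ν + h (σ ν)) hmem'
  have hrest : 0 ≤ ∑ ν ∈ (P.erase ν₀).erase (-ν₀), (h ν + h (σ ν)) :=
    Finset.sum_nonneg fun ν _ => hFnonneg ν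
  have hdiff : ∑ ν ∈ P, h ν
      = (∑ ν ∈ P, |(inner ℝ (y + t • ν₀) ν : ℝ)|) - ∑ ν ∈ P, |(inner ℝ y ν : ℝ)| := by
    simp only [hh]
    rw [Finset.sum_sub_distrib]
  rw [hg, hg]
  have h4t : 4 * t ≤ ∑ ν ∈ P, (h ν + h (σ ν)) := by
    rw [← hsplit1, ← hsplit2, hFν₀, hFν₀']
    linarith
  linarith
end

section
/- Let P be a finite root system in S^{N−1}, g(x) = (1/2)Σ_{ν∈P}|x·ν|, ν₀ ∈ P, s > 0, H = {x : x·ν₀ ≤ s}, and Ψ(x) = x + 2(s − x·ν₀)ν₀ the reflection across ∂H. Then g(Ψ(x)) < g(x) for every x with x·ν₀ > s. -/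
open Finset

private lemma abs_pair (a b d : ℝ) (h : 0 ≤ d * (a - b)) :
    |a| + |b| ≤ |a + d| + |b - d| := by
  rcases abs_cases a with ⟨e1, i1⟩ | ⟨e1, i1⟩ <;>
  rcases abs_cases b with ⟨e2, i2⟩ | ⟨e2, i2⟩ <;>
  rcases abs_cases (a + d) with ⟨e3, i3⟩ | ⟨e3, i3⟩ <;>
  rcases abs_cases (b - d) with ⟨e4, i4⟩ | ⟨e4, i4⟩ <;>
  rw [e1, e2, e3, e4] <;> nlinarith

private lemma key_step {N : ℕ} (P : Finset (EuclideanSpace ℝ (Fin N)))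
    (ν₀ : EuclideanSpace ℝ (Fin N)) (hν₀ : ν₀ ∈ P) (hν₀neg : -ν₀ ∈ P)
    (hone : (inner ℝ ν₀ ν₀ : ℝ) = 1)
    (hσm : ∀ p ∈ P, p - (2 * (inner ℝ p ν₀ : ℝ)) • ν₀ ∈ P)
    (y : EuclideanSpace ℝ (Fin N)) (hy : 0 ≤ (inner ℝ y ν₀ : ℝ))
    (t : ℝ) (ht : 0 ≤ t) :
    (∑ ν ∈ P, |(inner ℝ y ν : ℝ)|) + 2 * t ≤ ∑ ν ∈ P, |(inner ℝ (y + t • ν₀) ν : ℝ)| := by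
  classical
  set σ : EuclideanSpace ℝ (Fin N) → EuclideanSpace ℝ (Fin N) :=
    fun ν => ν - (2 * (inner ℝ ν ν₀ : ℝ)) • ν₀ with hσdef
  have hinσ : ∀ ν, (inner ℝ (σ ν) ν₀ : ℝ) = -(inner ℝ ν ν₀ : ℝ) := by
    intro ν
    simp only [hσdef, inner_sub_left, real_inner_smul_left, hone]
    ring
  have hσσ : ∀ ν, σ (σ ν) = ν := by
    intro ν
    simp only [hσdef, inner_sub_left, real_inner_smul_left, hone]
    module
  have hmem : ∀ ν, ν ∈ P ↔ σ ν ∈ P := by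
    intro ν
    constructor
    · exact fun h => hσm ν h
    · intro h
      have h2 := hσm (σ ν) h
      rwa [show σ ν - (2 * (inner ℝ (σ ν) ν₀ : ℝ)) • ν₀ = σ (σ ν) from rfl, hσσ] at h2
  have hbij : Function.Bijective σ := Function.Involutive.bijective hσσ
  set diff : EuclideanSpace ℝ (Fin N) → ℝ :=
    fun ν => |(inner ℝ (y + t • ν₀) ν : ℝ)| - |(inner ℝ y ν : ℝ)| with hdiffdef
  have hsumσ : ∑ ν ∈ P, diff (σ ν) = ∑ ν ∈ P, diff ν :=
    Finset.sum_bijective σ hbij (fun ν => hmem ν) (fun ν _ => rfl)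
  have hinner_shift : ∀ ν, (inner ℝ (y + t • ν₀) ν : ℝ) = (inner ℝ y ν : ℝ) + t * (inner ℝ ν ν₀ : ℝ) := by
    intro ν
    rw [inner_add_left, real_inner_smul_left, real_inner_comm ν₀ ν]
  have hinner_yσ : ∀ ν, (inner ℝ y (σ ν) : ℝ)
      = (inner ℝ y ν : ℝ) - 2 * (inner ℝ ν ν₀ : ℝ) * (inner ℝ y ν₀ : ℝ) := by
    intro ν
    simp only [hσdef, inner_sub_right, real_inner_smul_right]
  have hD : ∀ ν, 0 ≤ diff ν + diff (σ ν) := by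
    intro ν
    have h1 : diff ν = |(inner ℝ y ν : ℝ) + t * (inner ℝ ν ν₀ : ℝ)| - |(inner ℝ y ν : ℝ)| := by
      simp only [hdiffdef, hinner_shift ν]
    have h2 : diff (σ ν) =
        |((inner ℝ y ν : ℝ) - 2 * (inner ℝ ν ν₀ : ℝ) * (inner ℝ y ν₀ : ℝ)) - t * (inner ℝ ν ν₀ : ℝ)|
          - |(inner ℝ y ν : ℝ) - 2 * (inner ℝ ν ν₀ : ℝ) * (inner ℝ y ν₀ : ℝ)| := by
      simp only [hdiffdef, hinner_shift (σ ν), hinner_yσ ν, hinσ ν]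
      ring_nf
    have hd : 0 ≤ (t * (inner ℝ ν ν₀ : ℝ)) *
        ((inner ℝ y ν : ℝ) - ((inner ℝ y ν : ℝ) - 2 * (inner ℝ ν ν₀ : ℝ) * (inner ℝ y ν₀ : ℝ))) := by
      nlinarith [mul_nonneg (mul_nonneg ht hy) (sq_nonneg (inner ℝ ν ν₀ : ℝ))]
    have h3 := abs_pair (inner ℝ y ν) ((inner ℝ y ν : ℝ) - 2 * (inner ℝ ν ν₀ : ℝ) * (inner ℝ y ν₀ : ℝ))
      (t * (inner ℝ ν ν₀ : ℝ)) hd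
    linarith
  have hσν₀ : σ ν₀ = -ν₀ := by
    simp only [hσdef, hone]
    module
  have hσν₀' : σ (-ν₀) = ν₀ := by rw [← hσν₀, hσσ]
  have hdν₀ : diff ν₀ = t := by
    simp only [hdiffdef, hinner_shift ν₀, hone]
    rw [abs_of_nonneg hy, abs_of_nonneg (by nlinarith)]
    ring
  have hdν₀' : diff (-ν₀) = t := by
    have h1 : (inner ℝ y (-ν₀) : ℝ) = -(inner ℝ y ν₀ : ℝ) := by rw [inner_neg_right]
    have h2 : (inner ℝ (-ν₀) ν₀ : ℝ) = -1 := by rw [inner_neg_left, hone]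
    simp only [hdiffdef, hinner_shift (-ν₀), h1, h2]
    rw [abs_of_nonpos (by nlinarith), abs_of_nonpos (by nlinarith)]
    ring
  have hne : ν₀ ≠ -ν₀ := by
    intro h
    have h2 : (inner ℝ ν₀ ν₀ : ℝ) = -1 := by
      nth_rewrite 2 [h]
      rw [inner_neg_right, hone]
    rw [hone] at h2; norm_num at h2
  have hsub : ({ν₀, -ν₀} : Finset (EuclideanSpace ℝ (Fin N))) ⊆ P := by
    intro ν hν
    rcases Finset.mem_insert.mp hν with rfl | hν
    · exact hν₀
    · rw [Finset.mem_singleton] at hν; subst hν; exact hν₀neg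
  have hbound : 4 * t ≤ ∑ ν ∈ P, (diff ν + diff (σ ν)) := by
    have h1 : ∑ ν ∈ ({ν₀, -ν₀} : Finset (EuclideanSpace ℝ (Fin N))), (diff ν + diff (σ ν)) = 4 * t := by
      rw [Finset.sum_pair hne, hσν₀, hσν₀', hdν₀, hdν₀']
      ring
    calc 4 * t = ∑ ν ∈ ({ν₀, -ν₀} : Finset (EuclideanSpace ℝ (Fin N))), (diff ν + diff (σ ν)) := h1.symm
      _ ≤ ∑ ν ∈ P, (diff ν + diff (σ ν)) :=
        Finset.sum_le_sum_of_subset_of_nonneg hsub (fun ν _ _ => hD ν)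
  have hsplit : ∑ ν ∈ P, (diff ν + diff (σ ν)) = 2 * ∑ ν ∈ P, diff ν := by
    rw [Finset.sum_add_distrib, hsumσ]; ring
  have hfinal : 2 * t ≤ ∑ ν ∈ P, diff ν := by
    rw [hsplit] at hbound; linarith
  have hsd : ∑ ν ∈ P, diff ν
      = (∑ ν ∈ P, |(inner ℝ (y + t • ν₀) ν : ℝ)|) - ∑ ν ∈ P, |(inner ℝ y ν : ℝ)| := by
    simp only [hdiffdef, Finset.sum_sub_distrib]
  linarith [hsd ▸ hfinal]

private lemma g_reflect {N : ℕ} (P : Finset (EuclideanSpace ℝ (Fin N)))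
    (ν₀ : EuclideanSpace ℝ (Fin N))
    (hone : (inner ℝ ν₀ ν₀ : ℝ) = 1)
    (hσm : ∀ p ∈ P, p - (2 * (inner ℝ p ν₀ : ℝ)) • ν₀ ∈ P)
    (z : EuclideanSpace ℝ (Fin N)) :
    ∑ ν ∈ P, |(inner ℝ (z - (2 * (inner ℝ z ν₀ : ℝ)) • ν₀) ν : ℝ)|
      = ∑ ν ∈ P, |(inner ℝ z ν : ℝ)| := by
  set σ : EuclideanSpace ℝ (Fin N) → EuclideanSpace ℝ (Fin N) :=
    fun ν => ν - (2 * (inner ℝ ν ν₀ : ℝ)) • ν₀ with hσdef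
  have hσσ : ∀ ν, σ (σ ν) = ν := by
    intro ν
    simp only [hσdef, inner_sub_left, real_inner_smul_left, hone]
    module
  have hmem : ∀ ν, ν ∈ P ↔ σ ν ∈ P := by
    intro ν
    constructor
    · exact fun h => hσm ν h
    · intro h
      have h2 := hσm (σ ν) h
      rwa [show σ ν - (2 * (inner ℝ (σ ν) ν₀ : ℝ)) • ν₀ = σ (σ ν) from rfl, hσσ] at h2
  have hbij : Function.Bijective σ := Function.Involutive.bijective hσσ
  have hadj : ∀ ν, (inner ℝ (σ z) ν : ℝ) = (inner ℝ z (σ ν) : ℝ) := by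
    intro ν
    simp only [hσdef, inner_sub_left, inner_sub_right, real_inner_smul_left,
      real_inner_smul_right, real_inner_comm ν₀ ν]
    ring
  calc ∑ ν ∈ P, |(inner ℝ (σ z) ν : ℝ)| = ∑ ν ∈ P, |(inner ℝ z (σ ν) : ℝ)| := by
        refine Finset.sum_congr rfl fun ν _ => ?_
        rw [hadj ν]
    _ = ∑ ν ∈ P, |(inner ℝ z ν : ℝ)| :=
        Finset.sum_bijective σ hbij (fun ν => hmem ν)
          (g := fun ν => |(inner ℝ z ν : ℝ)|) (fun ν _ => rfl)


/-- for a finite root system P ⊆ S^{N−1}, g(x) = (1/2)Σ_{ν∈P}|x·ν|, ν₀ ∈ P,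
s > 0 and the reflection Ψ(x) = x + 2(s − x·ν₀)ν₀ across {x·ν₀ = s},
one has g(Ψ(x)) < g(x) whenever x·ν₀ > s. -/
theorem root_system_g_strict_decrease {N : ℕ}
    (P : Finset (EuclideanSpace ℝ (Fin N)))
    (hunit : ∀ ν ∈ P, ‖ν‖ = 1)
    (hneg : ∀ ν ∈ P, -ν ∈ P)
    (hrefl : ∀ ν ∈ P, ∀ p ∈ P, p - (2 * (inner ℝ p ν : ℝ)) • ν ∈ P)
    (g : EuclideanSpace ℝ (Fin N) → ℝ)
    (hg : ∀ x, g x = (1 / 2) * ∑ ν ∈ P, |(inner ℝ x ν : ℝ)|)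
    (ν₀ : EuclideanSpace ℝ (Fin N)) (hν₀ : ν₀ ∈ P) (s : ℝ) (hs : 0 < s)
    (Ψ : EuclideanSpace ℝ (Fin N) → EuclideanSpace ℝ (Fin N))
    (hΨ : ∀ x, Ψ x = x + (2 * (s - (inner ℝ x ν₀ : ℝ))) • ν₀) :
    ∀ x : EuclideanSpace ℝ (Fin N), s < (inner ℝ x ν₀ : ℝ) → g (Ψ x) < g x := by
  intro x hx
  have hone : (inner ℝ ν₀ ν₀ : ℝ) = 1 := by
    rw [real_inner_self_eq_norm_mul_norm, hunit ν₀ hν₀]; norm_num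
  have hσm : ∀ p ∈ P, p - (2 * (inner ℝ p ν₀ : ℝ)) • ν₀ ∈ P := fun p hp => hrefl ν₀ hν₀ p hp
  have hinnerΨ : (inner ℝ (Ψ x) ν₀ : ℝ) = 2 * s - (inner ℝ x ν₀ : ℝ) := by
    rw [hΨ, inner_add_left, real_inner_smul_left, hone]; ring
  rcases le_total (inner ℝ x ν₀ : ℝ) (2 * s) with hcase | hcase
  · have hy : 0 ≤ (inner ℝ (Ψ x) ν₀ : ℝ) := by rw [hinnerΨ]; linarith
    have hx2 : x = Ψ x + (2 * ((inner ℝ x ν₀ : ℝ) - s)) • ν₀ := by rw [hΨ x]; module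
    have hk := key_step P ν₀ hν₀ (hneg ν₀ hν₀) hone hσm (Ψ x) hy
      (2 * ((inner ℝ x ν₀ : ℝ) - s)) (by linarith)
    rw [← hx2] at hk
    rw [hg x, hg (Ψ x)]
    linarith
  · have hgΨ : ∑ ν ∈ P, |(inner ℝ (Ψ x - (2 * (inner ℝ (Ψ x) ν₀ : ℝ)) • ν₀) ν : ℝ)|
        = ∑ ν ∈ P, |(inner ℝ (Ψ x) ν : ℝ)| := g_reflect P ν₀ hone hσm (Ψ x)
    have hy0 : Ψ x - (2 * (inner ℝ (Ψ x) ν₀ : ℝ)) • ν₀ = x - (2 * s) • ν₀ := by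
      rw [hinnerΨ, hΨ x]; module
    have hy : 0 ≤ (inner ℝ (x - (2 * s) • ν₀) ν₀ : ℝ) := by
      rw [inner_sub_left, real_inner_smul_left, hone]; linarith
    have hx2 : x = (x - (2 * s) • ν₀) + (2 * s) • ν₀ := by module
    have hk := key_step P ν₀ hν₀ (hneg ν₀ hν₀) hone hσm (x - (2 * s) • ν₀) hy
      (2 * s) (by linarith)
    rw [← hx2] at hk
    rw [hy0] at hgΨ
    rw [hg x, hg (Ψ x), ← hgΨ]
    linarith
end

section
/- (Two-dimensional cross-sections of root systems) Let P ⊆ S^{N−1} be a finite root system: for every p ∈ P, −p ∈ P and the reflection x ↦ x − 2(x·p)p maps P to itself. Let Π be a two-dimensional linear subspace of ℝ^N with P ∩ Π nonempty. Then there exists m ∈ ℕ, m ≥ 1, such that P ∩ Π equals, up to a rotation of Π, the set of 2m equally spaced unit vectors {(cos(πi/m), sin(πi/m)) : 1 ≤ i ≤ 2m}. -/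
open Real

section aux

open Complex

private lemma crossSec_refl_identity (z w : ℂ) (h : Complex.normSq z = 1) :
    ((2 * (w.re * z.re + w.im * z.im) : ℝ) : ℂ) * z - w = z ^ 2 * (starRingEnd ℂ) w := by
  have h' : z.re * z.re + z.im * z.im = 1 := by rwa [Complex.normSq_apply] at h
  apply Complex.ext <;>
    simp [Complex.mul_re, Complex.mul_im, pow_two, Complex.sub_re, Complex.sub_im] <;>
    first
      | linear_combination w.re * h'
      | linear_combination w.im * h'

private lemma crossSec_roots_eq (m : ℕ) (hm : 1 ≤ m) :
    {z : ℂ | z ^ (2 * m) = 1} =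
      {z : ℂ | ∃ i : ℕ, 1 ≤ i ∧ i ≤ 2 * m ∧
        z = Complex.exp ((π * i / m : ℝ) * Complex.I)} := by
  have hm0 : (m : ℂ) ≠ 0 := Nat.cast_ne_zero.mpr (by omega)
  have h2m0 : (2 * m : ℕ) ≠ 0 := by omega
  have hexp : ∀ i : ℕ, (Complex.exp ((π * i / m : ℝ) * Complex.I)) ^ (2 * m) = 1 := by
    intro i
    rw [← Complex.exp_nat_mul]
    have harg : ((2 * m : ℕ) : ℂ) * (((π * i / m : ℝ) : ℂ) * I) = (i : ℕ) * (2 * π * I) := by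
      push_cast
      field_simp
    rw [harg, Complex.exp_nat_mul, Complex.exp_two_pi_mul_I, one_pow]
  ext z
  simp only [Set.mem_setOf_eq]
  constructor
  · intro hz
    haveI : NeZero (2 * m) := ⟨h2m0⟩
    have hζ : IsPrimitiveRoot (Complex.exp (2 * π * I / (2 * m : ℕ))) (2 * m) :=
      Complex.isPrimitiveRoot_exp _ h2m0
    obtain ⟨j, hj, rfl⟩ := hζ.eq_pow_of_pow_eq_one hz
    have hform : ∀ j : ℕ, (Complex.exp (2 * π * I / (2 * m : ℕ))) ^ j =
        Complex.exp ((π * j / m : ℝ) * Complex.I) := by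
      intro j
      rw [← Complex.exp_nat_mul]
      congr 1
      push_cast
      field_simp
    rcases Nat.eq_zero_or_pos j with hj0 | hjpos
    · refine ⟨2 * m, by omega, le_refl _, ?_⟩
      rw [hj0, pow_zero, ← hform]
      rw [← Complex.exp_nat_mul]
      have : ((2 * m : ℕ) : ℂ) * (2 * π * I / (2 * m : ℕ)) = 2 * π * I := by
        field_simp
      rw [this, Complex.exp_two_pi_mul_I]
    · exact ⟨j, hjpos, by omega, (hform j)⟩
  · rintro ⟨i, _, _, rfl⟩
    exact hexp i

private lemma crossSec_key (B : Finset ℂ) (h1 : (1:ℂ) ∈ B) (hneg : (-1:ℂ) ∈ B)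
    (h0 : ∀ b ∈ B, b ≠ 0)
    (hinv : ∀ b ∈ B, b⁻¹ ∈ B)
    (hsq : ∀ b ∈ B, ∀ c ∈ B, b ^ 2 * c ∈ B) :
    ∃ m : ℕ, 1 ≤ m ∧ (B : Set ℂ) = {z | z ^ (2 * m) = 1} := by
  classical
  -- powers stay in B
  have hpow : ∀ b ∈ B, ∀ n : ℕ, b ^ n ∈ B := by
    intro b hb n
    induction n using Nat.strong_induction_on with
    | _ n ih =>
      match n, ih with
      | 0, _ => simpa using h1
      | 1, _ => simpa using hb
      | (n+2), ih =>
        rcases Nat.even_or_odd (n+2) with ⟨k, hk⟩ | ⟨k, hk⟩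
        · have hk' : k < n + 2 := by omega
          have he : b ^ (n+2) = (b ^ k) ^ 2 * 1 := by rw [hk]; ring
          rw [he]; exact hsq _ (ih k hk') _ h1
        · have hk' : k < n + 2 := by omega
          have he : b ^ (n+2) = (b ^ k) ^ 2 * b := by rw [hk]; ring
          rw [he]; exact hsq _ (ih k hk') _ hb
  -- finite order
  have hord : ∀ b ∈ B, IsOfFinOrder b := by
    intro b hb
    rw [isOfFinOrder_iff_pow_eq_one]
    have hmaps : ∀ n ∈ Finset.range (B.card + 1), b ^ n ∈ B := fun n _ => hpow b hb n
    obtain ⟨i, hi, j, hj, hij, hbij⟩ :=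
      Finset.exists_ne_map_eq_of_card_lt_of_maps_to (by simp) hmaps
    rcases lt_or_gt_of_ne hij with h | h
    · refine ⟨j - i, by omega, ?_⟩
      have : b ^ i * b ^ (j - i) = b ^ i * 1 := by
        rw [mul_one, ← pow_add]
        rw [show i + (j - i) = j by omega]
        exact hbij.symm
      exact mul_left_cancel₀ (pow_ne_zero _ (h0 b hb)) this
    · refine ⟨i - j, by omega, ?_⟩
      have : b ^ j * b ^ (i - j) = b ^ j * 1 := by
        rw [mul_one, ← pow_add]
        rw [show j + (i - j) = i by omega]
        exact hbij
      exact mul_left_cancel₀ (pow_ne_zero _ (h0 b hb)) this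
  set M : ℕ := B.lcm orderOf with hMdef
  have hordM : ∀ b ∈ B, orderOf b ∣ M := fun b hb => Finset.dvd_lcm hb
  have hM : ∀ b ∈ B, b ^ M = 1 := fun b hb => orderOf_dvd_iff_pow_eq_one.mp (hordM b hb)
  have hM0 : M ≠ 0 := by
    rw [hMdef, Ne, Finset.lcm_eq_zero_iff]
    intro h
    obtain ⟨b, hb, hb0⟩ := h
    exact (hord b hb).orderOf_pos.ne' hb0
  haveI : NeZero M := ⟨hM0⟩
  have hMeven : Even M := by
    have := hM _ hneg
    rwa [neg_one_pow_eq_one_iff_even (by norm_num : (-1 : ℂ) ≠ 1)] at this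
  set ζ : ℂ := Complex.exp (2 * (π:ℝ) * I / M) with hζdef
  have hζ : IsPrimitiveRoot ζ M := Complex.isPrimitiveRoot_exp M hM0
  have hζ0 : ζ ≠ 0 := Complex.exp_ne_zero _
  have hrep : ∀ b ∈ B, ∃ i : ℕ, ζ ^ i = b := by
    intro b hb
    obtain ⟨i, _, hie⟩ := hζ.eq_pow_of_pow_eq_one (hM b hb)
    exact ⟨i, hie⟩
  choose k hk using hrep
  set K : ℂ → ℕ := fun b => if hb : b ∈ B then k b hb else 0 with hKdef
  have hK : ∀ b ∈ B, ζ ^ K b = b := by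
    intro b hb
    simp only [hKdef, dif_pos hb]
    exact hk b hb
  -- the "stabilizer" set U
  set U : Set ℂ := {u | u ∈ B ∧ ∀ c ∈ B, u * c ∈ B} with hUdef
  have hUB : ∀ u ∈ U, u ∈ B := fun u hu => hu.1
  have hU1 : (1:ℂ) ∈ U := ⟨h1, by intro c hc; simpa using hc⟩
  have hUmul : ∀ u ∈ U, ∀ v ∈ U, u * v ∈ U := by
    intro u hu v hv
    exact ⟨hu.2 v hv.1, fun c hc => by rw [mul_assoc]; exact hu.2 _ (hv.2 c hc)⟩
  have hUinv : ∀ u ∈ U, u⁻¹ ∈ U := by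
    intro u hu
    have hu0 := h0 u hu.1
    have himg : B.image (fun c => u * c) = B := by
      apply Finset.eq_of_subset_of_card_le
      · intro x hx
        simp only [Finset.mem_image] at hx
        obtain ⟨c, hc, rfl⟩ := hx
        exact hu.2 c hc
      · rw [Finset.card_image_of_injective _ (mul_right_injective₀ hu0)]
    refine ⟨hinv u hu.1, ?_⟩
    intro c hc
    rw [← himg, Finset.mem_image] at hc
    obtain ⟨c', hc', rfl⟩ := hc
    rw [inv_mul_cancel_left₀ hu0]
    exact hc'
  have hUpow : ∀ u ∈ U, ∀ n : ℕ, u ^ n ∈ U := by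
    intro u hu n
    induction n with
    | zero => simpa using hU1
    | succ n ih => rw [pow_succ]; exact hUmul _ ih _ hu
  have hUzpow : ∀ u ∈ U, ∀ n : ℤ, u ^ n ∈ U := by
    intro u hu n
    cases n with
    | ofNat n => simpa [zpow_natCast] using hUpow u hu n
    | negSucc n => rw [zpow_negSucc]; exact hUinv _ (hUpow u hu (n+1))
  have hsqU : ∀ b ∈ B, b ^ 2 ∈ U := by
    intro b hb
    exact ⟨by simpa using hpow b hb 2, hsq b hb⟩
  have hζM : ζ ^ M ∈ U := by rw [hζ.pow_eq_one]; exact hU1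
  -- Bezout closure of U among powers of ζ
  have gcdU : ∀ a b : ℕ, ζ ^ a ∈ U → ζ ^ b ∈ U → ζ ^ Nat.gcd a b ∈ U := by
    intro a b ha hb
    have hz : (ζ : ℂ) ^ ((Nat.gcd a b : ℤ)) =
        (ζ ^ a) ^ (Int.gcdA a b) * (ζ ^ b) ^ (Int.gcdB a b) := by
      rw [← zpow_natCast ζ a, ← zpow_natCast ζ b, ← zpow_mul, ← zpow_mul,
        ← zpow_add₀ hζ0]
      congr 1
      have hgab := Int.gcd_eq_gcd_ab (a : ℤ) (b : ℤ)
      have : Int.gcd (a:ℤ) (b:ℤ) = Nat.gcd a b := Int.gcd_natCast_natCast a b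
      rw [this] at hgab
      rw [hgab]
    have h1' := hUzpow _ ha (Int.gcdA a b)
    have h2' := hUzpow _ hb (Int.gcdB a b)
    have := hUmul _ h1' _ h2'
    rw [← hz, zpow_natCast] at this
    exact this
  -- fold over B
  have hfold : ∀ s : Finset ℂ, s ⊆ B →
      ζ ^ (Nat.gcd M (s.gcd fun b => 2 * K b)) ∈ U := by
    intro s
    induction s using Finset.induction_on with
    | empty => intro _; simpa [Finset.gcd_empty, Nat.gcd_zero_right] using hζM
    | insert _ _ hns ih =>
      rename_i a s
      intro hsub
      have haB : a ∈ B := hsub (Finset.mem_insert_self a s)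
      have hsB : s ⊆ B := fun x hx => hsub (Finset.mem_insert_of_mem hx)
      rw [Finset.gcd_insert]
      show ζ ^ (Nat.gcd M (Nat.gcd (2 * K a) (s.gcd fun b => 2 * K b))) ∈ U
      have hassoc : Nat.gcd M (Nat.gcd (2 * K a) (s.gcd fun b => 2 * K b)) =
          Nat.gcd (2 * K a) (Nat.gcd M (s.gcd fun b => 2 * K b)) := by
        rw [← Nat.gcd_assoc, Nat.gcd_comm M (2 * K a), Nat.gcd_assoc]
      rw [hassoc]
      apply gcdU
      · rw [mul_comm, pow_mul, hK a haB]
        exact hsqU a haB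
      · exact ih hsB
  have hg := hfold B (le_refl _)
  set g : ℕ := Nat.gcd M (B.gcd fun b => 2 * K b) with hgdef
  -- g divides 2
  have hd1 : Nat.gcd M (B.gcd K) = 1 := by
    set d := Nat.gcd M (B.gcd K) with hddef
    have hdM : d ∣ M := Nat.gcd_dvd_left _ _
    have hdh : ∀ b ∈ B, orderOf b ∣ M / d := by
      intro b hb
      rw [orderOf_dvd_iff_pow_eq_one]
      rw [← hK b hb, ← pow_mul, hζ.pow_eq_one_iff_dvd]
      have hdK : d ∣ K b := dvd_trans (Nat.gcd_dvd_right _ _) (Finset.gcd_dvd hb)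
      obtain ⟨t, ht⟩ := hdK
      rw [ht, mul_assoc, mul_comm t (M / d), ← mul_assoc, Nat.mul_div_cancel' hdM]
      exact Dvd.intro t rfl
    have hMle : M ∣ M / d := Finset.lcm_dvd hdh
    have hd0 : d ≠ 0 := by
      intro h
      rw [h] at hdM
      exact hM0 (Nat.eq_zero_of_zero_dvd hdM)
    by_contra hne1
    have hd2 : 2 ≤ d := by omega
    have : M / d < M := Nat.div_lt_self (Nat.pos_of_ne_zero hM0) hd2
    have : M ≤ M / d := Nat.le_of_dvd (by
      have := Nat.div_pos (Nat.le_of_dvd (Nat.pos_of_ne_zero hM0) hdM) (Nat.pos_of_ne_zero hd0)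
      exact this) hMle
    omega
  have hgdvd2 : g ∣ 2 := by
    have h2d : (B.gcd fun b => 2 * K b) = 2 * B.gcd K := by
      rw [Finset.gcd_mul_left]
      simp
    have : g ∣ Nat.gcd (2 * M) (2 * B.gcd K) := by
      apply Nat.dvd_gcd
      · exact dvd_trans (Nat.gcd_dvd_left _ _) (dvd_mul_left M 2)
      · rw [hgdef, h2d]; exact Nat.gcd_dvd_right _ _
    rwa [Nat.gcd_mul_left, hd1, mul_one] at this
  have hg0 : g ≠ 0 := by
    intro h
    rw [hgdef] at h
    exact hM0 (Nat.eq_zero_of_gcd_eq_zero_left h)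
  -- B = M-th roots of unity
  have hBeq : (B : Set ℂ) = {z | z ^ M = 1} := by
    ext z
    simp only [Finset.mem_coe, Set.mem_setOf_eq]
    constructor
    · exact fun hz => hM z hz
    · intro hz
      obtain ⟨j, hjM, rfl⟩ := hζ.eq_pow_of_pow_eq_one hz
      rcases (Nat.dvd_prime Nat.prime_two).mp hgdvd2 with hg1 | hg2
      · have : ζ ∈ U := by rw [hg1] at hg; simpa using hg
        exact hUB _ (hUpow _ this j)
      · have hζ2 : ζ ^ 2 ∈ U := by rw [hg2] at hg; exact hg
        rcases Nat.even_or_odd j with ⟨t, ht⟩ | hodd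
        · have : ζ ^ j = (ζ ^ 2) ^ t := by rw [← pow_mul]; congr 1; omega
          rw [this]
          exact hUB _ (hUpow _ hζ2 t)
        · -- need an element with odd K
          have h2M : 2 ∣ M := hg2 ▸ Nat.gcd_dvd_left _ _
          have hex : ∃ b ∈ B, Odd (K b) := by
            by_contra hno
            push_neg at hno
            have hdh : ∀ b ∈ B, orderOf b ∣ M / 2 := by
              intro b hb
              rw [orderOf_dvd_iff_pow_eq_one, ← hK b hb, ← pow_mul,
                hζ.pow_eq_one_iff_dvd]
              have heb : Even (K b) := Nat.not_odd_iff_even.mp (hno b hb)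
              obtain ⟨t, ht⟩ := heb
              obtain ⟨M2, hM2⟩ := h2M
              refine ⟨t, ?_⟩
              rw [ht, hM2]
              rw [Nat.mul_div_cancel_left _ (by norm_num : 0 < 2)]
              ring
            have hMle : M ∣ M / 2 := Finset.lcm_dvd hdh
            have hlt : M / 2 < M := Nat.div_lt_self (Nat.pos_of_ne_zero hM0) (by norm_num)
            have hpos : 0 < M / 2 := Nat.div_pos (Nat.le_of_dvd (Nat.pos_of_ne_zero hM0) h2M) (by norm_num)
            have := Nat.le_of_dvd hpos hMle
            omega
          obtain ⟨b₀, hb₀, hKodd⟩ := hex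
          have hsplit : (ζ : ℂ) ^ j = ζ ^ ((j : ℤ) - (K b₀ : ℤ)) * ζ ^ ((K b₀ : ℤ)) := by
            rw [← zpow_add₀ hζ0, sub_add_cancel, zpow_natCast]
          have heven : ∃ t : ℤ, (j : ℤ) - (K b₀ : ℤ) = 2 * t := by
            obtain ⟨a, ha⟩ := hodd
            obtain ⟨c, hc⟩ := hKodd
            exact ⟨(a : ℤ) - (c : ℤ), by push_cast [ha, hc]; ring⟩
          obtain ⟨t, ht⟩ := heven
          have hin : ζ ^ ((j : ℤ) - (K b₀ : ℤ)) ∈ U := by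
            rw [ht, zpow_mul, show ((2:ℤ)) = ((2:ℕ):ℤ) by norm_num, zpow_natCast]
            exact hUzpow _ hζ2 t
          rw [hsplit, zpow_natCast, hK b₀ hb₀]
          exact hin.2 b₀ hb₀
  obtain ⟨m, hm⟩ := hMeven
  have hM2m : M = 2 * m := by omega
  refine ⟨m, by omega, ?_⟩
  rw [hBeq, ← hM2m]


end aux

/-- Two-dimensional cross-sections of root systems: if P ⊆ S^{N−1} is a finite
root system and Pl a two-dimensional linear subspace Pl with P ∩ Pl ≠ ∅, then, up to a rotation
(i.e. in a suitable orthonormal basis e, f of Pl), P ∩ Pl is the set of 2m equally spaced unit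
vectors {(cos(πi/m), sin(πi/m)) : 1 ≤ i ≤ 2m} for some m ≥ 1. -/
theorem root_system_cross_section {N : ℕ}
    (P : Finset (EuclideanSpace ℝ (Fin N)))
    (hunit : ∀ p ∈ P, ‖p‖ = 1)
    (hneg : ∀ p ∈ P, -p ∈ P)
    (hrefl : ∀ p ∈ P, ∀ q ∈ P, q - (2 * (inner ℝ q p : ℝ)) • p ∈ P)
    (Pl : Submodule ℝ (EuclideanSpace ℝ (Fin N)))
    (hdim : Module.finrank ℝ Pl = 2)
    (hne : ((P : Set (EuclideanSpace ℝ (Fin N))) ∩ (Pl : Set (EuclideanSpace ℝ (Fin N)))).Nonempty) :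
    ∃ m : ℕ, 1 ≤ m ∧ ∃ e f : EuclideanSpace ℝ (Fin N),
      e ∈ Pl ∧ f ∈ Pl ∧ ‖e‖ = 1 ∧ ‖f‖ = 1 ∧ (inner ℝ e f : ℝ) = 0 ∧
      (P : Set (EuclideanSpace ℝ (Fin N))) ∩ (Pl : Set (EuclideanSpace ℝ (Fin N))) =
        {x | ∃ i : ℕ, 1 ≤ i ∧ i ≤ 2 * m ∧
          x = Real.cos (π * i / m) • e + Real.sin (π * i / m) • f} := by
  classical
  obtain ⟨p₀, hp₀P, hp₀Pl⟩ := hne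
  have hp₀P' : p₀ ∈ P := hp₀P
  have hp₀n : ‖p₀‖ = 1 := hunit _ hp₀P'
  have hp₀0 : p₀ ≠ 0 := by
    intro h; rw [h, norm_zero] at hp₀n; norm_num at hp₀n
  have hex : ∃ v ∈ Pl, v ∉ Submodule.span ℝ {p₀} := by
    by_contra h
    push_neg at h
    have hle : Pl ≤ Submodule.span ℝ {p₀} := h
    have h1 := Submodule.finrank_mono hle
    rw [hdim, finrank_span_singleton hp₀0] at h1
    omega
  obtain ⟨v, hvPl, hvs⟩ := hex
  have hee : (inner ℝ p₀ p₀ : ℝ) = 1 := by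
    rw [real_inner_self_eq_norm_sq, hp₀n]; norm_num
  have hfex : ∃ f, f ∈ Pl ∧ ‖f‖ = 1 ∧ (inner ℝ p₀ f : ℝ) = 0 := by
    set f₀ := v - (inner ℝ p₀ v : ℝ) • p₀ with hf₀def
    have hf₀Pl : f₀ ∈ Pl := Pl.sub_mem hvPl (Pl.smul_mem _ hp₀Pl)
    have hef₀ : (inner ℝ p₀ f₀ : ℝ) = 0 := by
      rw [hf₀def, inner_sub_right, real_inner_smul_right, hee, mul_one, sub_self]
    have hf₀0 : f₀ ≠ 0 := by
      intro h
      apply hvs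
      rw [Submodule.mem_span_singleton]
      refine ⟨(inner ℝ p₀ v : ℝ), ?_⟩
      have h2 : v - (inner ℝ p₀ v : ℝ) • p₀ = 0 := h
      have h3 := sub_eq_zero.mp h2
      rw [← h3]
    refine ⟨‖f₀‖⁻¹ • f₀, Pl.smul_mem _ hf₀Pl, norm_smul_inv_norm hf₀0, ?_⟩
    rw [real_inner_smul_right, hef₀, mul_zero]
  obtain ⟨f, hfPl, hfn, hef⟩ := hfex
  have hfe : (inner ℝ f p₀ : ℝ) = 0 := by rw [real_inner_comm]; exact hef
  have hff : (inner ℝ f f : ℝ) = 1 := by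
    rw [real_inner_self_eq_norm_sq, hfn]; norm_num
  -- p₀, f is an orthonormal basis of Pl
  have hli : LinearIndependent ℝ ![p₀, f] := by
    rw [LinearIndependent.pair_iff]
    intro s t hst
    have h1 : (inner ℝ p₀ (s • p₀ + t • f) : ℝ) = 0 := by rw [hst, inner_zero_right]
    rw [inner_add_right, real_inner_smul_right, real_inner_smul_right, hee, hef] at h1
    have h2 : (inner ℝ f (s • p₀ + t • f) : ℝ) = 0 := by rw [hst, inner_zero_right]
    rw [inner_add_right, real_inner_smul_right, real_inner_smul_right, hfe, hff] at h2
    constructor <;> [skip; skip] <;> linarith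
  have hWPl : Submodule.span ℝ {p₀, f} = Pl := by
    apply Submodule.eq_of_le_of_finrank_le
    · rw [Submodule.span_le]
      rintro x (rfl | rfl)
      · exact hp₀Pl
      · exact hfPl
    · rw [hdim]
      have hsp : ({p₀, f} : Set (EuclideanSpace ℝ (Fin N))) = Set.range ![p₀, f] := by
        simp only [Matrix.range_cons, Matrix.range_empty, Set.union_empty,
          Set.union_singleton]
        exact Set.pair_comm p₀ f
      rw [hsp, finrank_span_eq_card hli]
      simp
  have hexp : ∀ x ∈ Pl, (inner ℝ p₀ x : ℝ) • p₀ + (inner ℝ f x : ℝ) • f = x := by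
    intro x hx
    rw [← hWPl] at hx
    obtain ⟨s, t, hst⟩ := Submodule.mem_span_pair.mp hx
    have hs : (inner ℝ p₀ x : ℝ) = s := by
      rw [← hst, inner_add_right, real_inner_smul_right, real_inner_smul_right, hee, hef]
      ring
    have ht : (inner ℝ f x : ℝ) = t := by
      rw [← hst, inner_add_right, real_inner_smul_right, real_inner_smul_right, hfe, hff]
      ring
    rw [hs, ht, hst]
  -- complex coordinates
  set c : EuclideanSpace ℝ (Fin N) → ℂ :=
    fun x => ((inner ℝ p₀ x : ℝ) : ℂ) + ((inner ℝ f x : ℝ) : ℂ) * Complex.I with hcdef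
  set ψ : ℂ → EuclideanSpace ℝ (Fin N) := fun z => z.re • p₀ + z.im • f with hψdef
  have hcre : ∀ x, (c x).re = (inner ℝ p₀ x : ℝ) := by intro x; simp [hcdef]
  have hcim : ∀ x, (c x).im = (inner ℝ f x : ℝ) := by intro x; simp [hcdef]
  have hψc : ∀ x ∈ Pl, ψ (c x) = x := by
    intro x hx
    simp only [hψdef, hcre, hcim]
    exact hexp x hx
  have hinner_ψ : ∀ z w : ℂ, (inner ℝ (ψ z) (ψ w) : ℝ) = z.re * w.re + z.im * w.im := by
    intro z w
    simp only [hψdef]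
    simp only [inner_add_left, inner_add_right, real_inner_smul_left,
      real_inner_smul_right, hee, hef, hfe, hff]
    ring
  have hinner_c : ∀ x ∈ Pl, ∀ y ∈ Pl,
      (inner ℝ x y : ℝ) = (c x).re * (c y).re + (c x).im * (c y).im := by
    intro x hx y hy
    rw [show (inner ℝ x y : ℝ) = (inner ℝ (ψ (c x)) (ψ (c y)) : ℝ) by
      rw [hψc x hx, hψc y hy]]
    exact hinner_ψ _ _
  -- the finite set of cross-section points and its image
  set Pf : Finset (EuclideanSpace ℝ (Fin N)) := P.filter (fun x => x ∈ Pl) with hPfdef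
  have hPf : ∀ x, x ∈ Pf ↔ x ∈ P ∧ x ∈ Pl := by
    intro x; simp [hPfdef]
  set B : Finset ℂ := Pf.image c with hBdef
  have hmemB : ∀ x ∈ Pf, c x ∈ B := fun x hx => Finset.mem_image_of_mem c hx
  have hnormSq : ∀ x ∈ Pf, Complex.normSq (c x) = 1 := by
    intro x hx
    obtain ⟨hxP, hxPl⟩ := (hPf x).mp hx
    have h1 : (inner ℝ x x : ℝ) = 1 := by
      rw [real_inner_self_eq_norm_sq, hunit x hxP]; norm_num
    rw [Complex.normSq_apply, ← hinner_c x hxPl x hxPl, h1]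
  have hcp₀ : c p₀ = 1 := by
    apply Complex.ext
    · rw [hcre]
      simpa using hee
    · rw [hcim]
      simpa using hfe
  have hp₀Pf : p₀ ∈ Pf := (hPf _).mpr ⟨hp₀P', hp₀Pl⟩
  have h1B : (1 : ℂ) ∈ B := hcp₀ ▸ hmemB p₀ hp₀Pf
  have hcneg : ∀ x, c (-x) = - c x := by
    intro x
    simp only [hcdef, inner_neg_right]
    push_cast
    ring
  have hnegB : (-1 : ℂ) ∈ B := by
    have hm : -p₀ ∈ Pf := (hPf _).mpr ⟨hneg _ hp₀P', Pl.neg_mem hp₀Pl⟩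
    have h := hmemB _ hm
    rwa [hcneg, hcp₀] at h
  -- the reflection closure in the plane
  have hreflPf : ∀ p ∈ Pf, ∀ q ∈ Pf, (2 * (inner ℝ q p : ℝ)) • p - q ∈ Pf := by
    intro p hp q hq
    obtain ⟨hpP, hpPl⟩ := (hPf p).mp hp
    obtain ⟨hqP, hqPl⟩ := (hPf q).mp hq
    refine (hPf _).mpr ⟨?_, ?_⟩
    · have h := hneg _ (hrefl p hpP q hqP)
      simpa [neg_sub] using h
    · exact Pl.sub_mem (Pl.smul_mem _ hpPl) hqPl
  have hclin : ∀ (t : ℝ) (x y : EuclideanSpace ℝ (Fin N)),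
      c (t • x - y) = (t : ℂ) * c x - c y := by
    intro t x y
    simp only [hcdef, inner_sub_right, real_inner_smul_right]
    push_cast
    ring
  have hcrefl : ∀ p ∈ Pf, ∀ q ∈ Pf,
      c ((2 * (inner ℝ q p : ℝ)) • p - q) = (c p) ^ 2 * (starRingEnd ℂ) (c q) := by
    intro p hp q hq
    obtain ⟨hpP, hpPl⟩ := (hPf p).mp hp
    obtain ⟨hqP, hqPl⟩ := (hPf q).mp hq
    rw [hclin]
    have hip : (inner ℝ q p : ℝ) = (c q).re * (c p).re + (c q).im * (c p).im :=
      hinner_c q hqPl p hpPl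
    rw [hip]
    exact crossSec_refl_identity (c p) (c q) (hnormSq p hp)
  have hconjB : ∀ b ∈ B, (starRingEnd ℂ) b ∈ B := by
    intro b hb
    rw [hBdef, Finset.mem_image] at hb
    obtain ⟨q, hq, rfl⟩ := hb
    have hmem := hmemB _ (hreflPf p₀ hp₀Pf q hq)
    rw [hcrefl p₀ hp₀Pf q hq, hcp₀, one_pow, one_mul] at hmem
    exact hmem
  have hsqB : ∀ b ∈ B, ∀ b' ∈ B, b ^ 2 * b' ∈ B := by
    intro b hb b' hb'
    obtain ⟨p, hp, rfl⟩ := Finset.mem_image.mp hb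
    have hcb' := hconjB b' hb'
    obtain ⟨q, hq, hcq⟩ := Finset.mem_image.mp hcb'
    have hb'eq : b' = (starRingEnd ℂ) (c q) := by
      rw [hcq, Complex.conj_conj]
    rw [hb'eq]
    have hmem := hmemB _ (hreflPf p hp q hq)
    rwa [hcrefl p hp q hq] at hmem
  have h0B : ∀ b ∈ B, b ≠ 0 := by
    intro b hb h0'
    obtain ⟨x, hx, rfl⟩ := Finset.mem_image.mp hb
    have h := hnormSq x hx
    rw [h0'] at h
    simp at h
  have hinvB : ∀ b ∈ B, b⁻¹ ∈ B := by
    intro b hb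
    have hc := hconjB b hb
    have heq : b⁻¹ = (starRingEnd ℂ) b := by
      apply inv_eq_of_mul_eq_one_right
      obtain ⟨x, hx, rfl⟩ := Finset.mem_image.mp hb
      rw [Complex.mul_conj, hnormSq x hx]
      norm_num
    rw [heq]
    exact hc
  obtain ⟨m, hm, hBeq⟩ := crossSec_key B h1B hnegB h0B hinvB hsqB
  refine ⟨m, hm, p₀, f, hp₀Pl, hfPl, hp₀n, hfn, hef, ?_⟩
  have hPB : (P : Set (EuclideanSpace ℝ (Fin N))) ∩ Pl = ψ '' (B : Set ℂ) := by
    ext x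
    constructor
    · rintro ⟨hxP, hxPl⟩
      exact ⟨c x, hmemB x ((hPf x).mpr ⟨hxP, hxPl⟩), hψc x hxPl⟩
    · rintro ⟨z, hz, rfl⟩
      obtain ⟨x, hx, rfl⟩ := Finset.mem_image.mp (Finset.mem_coe.mp hz)
      obtain ⟨hxP, hxPl⟩ := (hPf x).mp hx
      rw [hψc x hxPl]
      exact ⟨hxP, hxPl⟩
  rw [hPB, hBeq, crossSec_roots_eq m hm]
  ext x
  simp only [Set.mem_image, Set.mem_setOf_eq]
  constructor
  · rintro ⟨z, ⟨i, hi1, hi2, rfl⟩, rfl⟩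
    refine ⟨i, hi1, hi2, ?_⟩
    simp only [hψdef, Complex.exp_ofReal_mul_I_re, Complex.exp_ofReal_mul_I_im]
  · rintro ⟨i, hi1, hi2, rfl⟩
    refine ⟨Complex.exp ((π * i / m : ℝ) * Complex.I), ⟨i, hi1, hi2, rfl⟩, ?_⟩
    simp only [hψdef, Complex.exp_ofReal_mul_I_re, Complex.exp_ofReal_mul_I_im]
end

section
/- (Hölder-in-time bound from per-step L¹ estimates) Suppose sets (E_k)_{k≥0} in ℝ^N satisfy: for all k ≥ 1 and all 0 < ℓ ≤ c√h, |E_k Δ E_{k−1}| ≤ C(ℓ·P₀ + ℓ^{−1}·d_k), where d_k ≥ 0 with Σ_{k=1}^∞ d_k ≤ h·P₀, and c, C, P₀, h > 0. Then for all integers 0 ≤ i ≤ j with (j−i)h ≥ h, |E_j Δ E_i| ≤ C'·P₀·((j−i)h)^{1/2} for a constant C' depending only on c and C. -/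
open MeasureTheory

lemma symmDiff_chain_le {α : Type*} [MeasurableSpace α] (μ : Measure α)
    (E : ℕ → Set α) (i j : ℕ) (hij : i ≤ j) :
    μ (symmDiff (E j) (E i)) ≤ ∑ k ∈ Finset.Ico i j, μ (symmDiff (E (k + 1)) (E k)) := by
  induction j, hij using Nat.le_induction with
  | base => simp [symmDiff_self]
  | succ j hj ih =>
    rw [Finset.sum_Ico_succ_top hj]
    calc μ (symmDiff (E (j + 1)) (E i))
        ≤ μ (symmDiff (E (j + 1)) (E j) ∪ symmDiff (E j) (E i)) :=
          measure_mono (symmDiff_triangle _ _ _)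
      _ ≤ μ (symmDiff (E (j + 1)) (E j)) + μ (symmDiff (E j) (E i)) := measure_union_le _ _
      _ ≤ μ (symmDiff (E (j + 1)) (E j)) + ∑ k ∈ Finset.Ico i j, μ (symmDiff (E (k + 1)) (E k)) :=
          add_le_add le_rfl ih
      _ = _ := by ring

/-- Hölder-in-time bound from per-step L¹ estimates: if for each step
|E_k Δ E_{k−1}| ≤ C(ℓ·P₀ + ℓ⁻¹·d_k) for all 0 < ℓ ≤ c√h, with Σ d_k ≤ h·P₀, then
|E_j Δ E_i| ≤ C'·P₀·((j−i)h)^{1/2} whenever (j−i)h ≥ h, with C' depending only on c, C. -/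
theorem holder_in_time (c C : ℝ) (hc : 0 < c) (hC : 0 < C) :
    ∃ C' : ℝ, 0 < C' ∧
      ∀ (N : ℕ) (h P₀ : ℝ), 0 < h → 0 < P₀ →
      ∀ (E : ℕ → Set (EuclideanSpace ℝ (Fin N))) (d : ℕ → ℝ),
        (∀ k, 0 ≤ d k) → Summable d → (∑' k : ℕ, d (k + 1)) ≤ h * P₀ →
        (∀ k, 1 ≤ k → ∀ ℓ : ℝ, 0 < ℓ → ℓ ≤ c * Real.sqrt h →
          volume (symmDiff (E k) (E (k - 1))) ≤ ENNReal.ofReal (C * (ℓ * P₀ + ℓ⁻¹ * d k))) →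
        ∀ i j : ℕ, i ≤ j → h ≤ ((j : ℝ) - i) * h →
          volume (symmDiff (E j) (E i)) ≤
            ENNReal.ofReal (C' * P₀ * Real.sqrt (((j : ℝ) - i) * h)) := by
  refine ⟨C * (c + c⁻¹), by positivity, ?_⟩
  intro N h P₀ hh hP₀ E d hd hsum htsum hstep i j hij hjh
  -- n = j - i ≥ 1
  set n : ℕ := j - i with hn
  have hcast : ((j : ℝ) - i) = (n : ℝ) := by
    rw [hn, Nat.cast_sub hij]
  have hn1 : 1 ≤ n := by
    rcases Nat.eq_zero_or_pos n with h0 | h1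
    · exfalso; rw [hcast, h0] at hjh; push_cast at hjh; nlinarith
    · exact h1
  have hnR : (1 : ℝ) ≤ (n : ℝ) := by exact_mod_cast hn1
  have hnpos : (0 : ℝ) < n := by linarith
  have hsqrtn : (1 : ℝ) ≤ Real.sqrt n := by
    rw [show (1:ℝ) = Real.sqrt 1 by simp]
    exact Real.sqrt_le_sqrt hnR
  have hsqrtn' : (0 : ℝ) < Real.sqrt n := by linarith
  have hsqrth : (0 : ℝ) < Real.sqrt h := Real.sqrt_pos.mpr hh
  set ℓ : ℝ := c * Real.sqrt h / Real.sqrt n with hl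
  have hlpos : 0 < ℓ := by positivity
  have hlle : ℓ ≤ c * Real.sqrt h := by
    rw [hl, div_le_iff₀ hsqrtn']
    nlinarith [mul_pos hc hsqrth]
  -- sum of d over the window
  have hdsum : ∑ k ∈ Finset.Ico i j, d (k + 1) ≤ h * P₀ := by
    refine le_trans ?_ htsum
    have hsum' : Summable (fun k : ℕ => d (k + 1)) := by
      exact (summable_nat_add_iff 1).mpr hsum
    exact hsum'.sum_le_tsum _ (fun k _ => hd _)
  calc volume (symmDiff (E j) (E i))
      ≤ ∑ k ∈ Finset.Ico i j, volume (symmDiff (E (k + 1)) (E k)) :=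
        symmDiff_chain_le _ E i j hij
    _ ≤ ∑ k ∈ Finset.Ico i j, ENNReal.ofReal (C * (ℓ * P₀ + ℓ⁻¹ * d (k + 1))) := by
        refine Finset.sum_le_sum fun k _ => ?_
        have := hstep (k + 1) (by omega) ℓ hlpos hlle
        simpa using this
    _ = ENNReal.ofReal (∑ k ∈ Finset.Ico i j, C * (ℓ * P₀ + ℓ⁻¹ * d (k + 1))) := by
        rw [ENNReal.ofReal_sum_of_nonneg]
        intro k _
        have := hd (k + 1)
        positivity
    _ ≤ ENNReal.ofReal (C * (c + c⁻¹) * P₀ * Real.sqrt (((j : ℝ) - i) * h)) := by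
        apply ENNReal.ofReal_le_ofReal
        have hcard : (Finset.Ico i j).card = n := by simp [hn]
        have hsq : Real.sqrt (n : ℝ) * Real.sqrt (n : ℝ) = (n : ℝ) :=
          Real.mul_self_sqrt hnpos.le
        have hsqh : Real.sqrt h * Real.sqrt h = h := Real.mul_self_sqrt hh.le
        calc ∑ k ∈ Finset.Ico i j, C * (ℓ * P₀ + ℓ⁻¹ * d (k + 1))
            = (n : ℝ) * (C * ℓ * P₀) + C * ℓ⁻¹ * ∑ k ∈ Finset.Ico i j, d (k + 1) := by
              have he : ∀ k : ℕ, C * (ℓ * P₀ + ℓ⁻¹ * d (k + 1))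
                  = C * ℓ * P₀ + C * ℓ⁻¹ * d (k + 1) := fun k => by ring
              simp only [he]
              rw [Finset.sum_add_distrib, Finset.sum_const, hcard, nsmul_eq_mul,
                ← Finset.mul_sum]
          _ ≤ (n : ℝ) * (C * ℓ * P₀) + C * ℓ⁻¹ * (h * P₀) := by
              have : (0:ℝ) ≤ C * ℓ⁻¹ := by positivity
              nlinarith [hdsum]
          _ = C * (c + c⁻¹) * P₀ * Real.sqrt (((j : ℝ) - i) * h) := by
              rw [hcast, Real.sqrt_mul hnpos.le]
              set sn := Real.sqrt (n : ℝ) with hsn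
              set sh := Real.sqrt h with hsh
              rw [hl, ← hsq, ← hsqh]
              have h1 : sn ≠ 0 := ne_of_gt hsqrtn'
              have h2 : sh ≠ 0 := ne_of_gt hsqrth
              have h3 : c ≠ 0 := ne_of_gt hc
              field_simp
end
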